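/- Let φ: P^1 → P^2, (X1:X2) ↦ (g1:g2:g3), with g1,g2,g3 homogeneous of degree d ≥ 2 over an algebraically closed field, gcd(g1,g2,g3) a nonzero constant, and let (p,q) be a μ-basis with μ = 1: p = U0(T)X1 + U1(T)X2 with U0, U1 linear forms in K[T1,T2,T3]. If d ≥ 3 and φ is birational onto its image C, then C has a unique proper singular point 𝔭, this point has multiplicity d−1, and U0(𝔭) = U1(𝔭) = 0. -/

import Mathlib

open MvPolynomial

noncomputable section

/-- The Sylvester matrix of two binary forms of degrees `d1`, `d2` with coefficient
sequences `U` (so `f1 = Σ U i · X1^{d1−i} X2^i`) and `V`. -/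
def sylMatrix {A : Type*} [CommRing A] (d1 d2 : ℕ) (U V : ℕ → A) :
    Matrix (Fin (d1 + d2)) (Fin (d1 + d2)) A :=
  Matrix.of fun i j =>
    if (j : ℕ) < d2 then
      (if (j : ℕ) ≤ i ∧ (i : ℕ) ≤ (j : ℕ) + d1 then U ((i : ℕ) - j) else 0)
    else
      (if (j : ℕ) - d2 ≤ i ∧ (i : ℕ) ≤ (j : ℕ) - d2 + d2 then
        V ((i : ℕ) - ((j : ℕ) - d2)) else 0)

/-- The resultant `Res(f1,f2)` as the determinant of the Sylvester matrix. -/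
def res {A : Type*} [CommRing A] (d1 d2 : ℕ) (U V : ℕ → A) : A :=
  (sylMatrix d1 d2 U V).det

/-- `multAtLeast F a m` : the plane curve `F = 0` has multiplicity at least `m` at the
(projective) point `a`, i.e. for every direction `v` the univariate polynomial
`t ↦ F(a + t v)` vanishes to order at least `m` at `t = 0`. -/
def multAtLeast {K : Type*} [CommRing K] (F : MvPolynomial (Fin 3) K)
    (a : Fin 3 → K) (m : ℕ) : Prop :=
  ∀ v : Fin 3 → K, ∀ j < m,
    (MvPolynomial.aeval
      (fun i => Polynomial.C (a i) + Polynomial.C (v i) * Polynomial.X) F).coeff j = 0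


/-! ### Auxiliary lemmas -/

lemma vec3_ext {K : Type*} (f g : Fin 3 → K) (h0 : f 0 = g 0) (h1 : f 1 = g 1)
    (h2 : f 2 = g 2) : f = g := by
  funext j
  fin_cases j
  · exact h0
  · exact h1
  · exact h2

lemma vec2_eta {K : Type*} (y : Fin 2 → K) : ![y 0, y 1] = y := by
  funext j
  fin_cases j <;> rfl

def crossP {K : Type*} [CommRing K] (u w : Fin 3 → K) : Fin 3 → K :=
  ![u 1 * w 2 - u 2 * w 1, u 2 * w 0 - u 0 * w 2, u 0 * w 1 - u 1 * w 0]

lemma crossP0 {K : Type*} [CommRing K] (u w : Fin 3 → K) :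
    crossP u w 0 = u 1 * w 2 - u 2 * w 1 := rfl
lemma crossP1 {K : Type*} [CommRing K] (u w : Fin 3 → K) :
    crossP u w 1 = u 2 * w 0 - u 0 * w 2 := rfl
lemma crossP2 {K : Type*} [CommRing K] (u w : Fin 3 → K) :
    crossP u w 2 = u 0 * w 1 - u 1 * w 0 := rfl

lemma vec3_ne_zero {K : Type*} [Zero K] (f : Fin 3 → K) (hf : f ≠ 0) :
    f 0 ≠ 0 ∨ f 1 ≠ 0 ∨ f 2 ≠ 0 := by
  by_contra hc
  push_neg at hc
  exact hf (vec3_ext _ _ hc.1 hc.2.1 hc.2.2)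

lemma vec2_ne_zero {K : Type*} [Zero K] (f : Fin 2 → K) (hf : f ≠ 0) :
    f 0 ≠ 0 ∨ f 1 ≠ 0 := by
  by_contra hc
  push_neg at hc
  apply hf
  funext j
  fin_cases j
  · exact hc.1
  · exact hc.2

/-- if z ⟂ P and z ⟂ Q then z × (P×Q) = 0. -/
lemma cross_triple {K : Type*} [CommRing K] (P Q z : Fin 3 → K)
    (h1 : z 0 * P 0 + z 1 * P 1 + z 2 * P 2 = 0)
    (h2 : z 0 * Q 0 + z 1 * Q 1 + z 2 * Q 2 = 0) :
    crossP z (crossP P Q) = 0 := by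
  refine vec3_ext _ _ ?_ ?_ ?_ <;>
    simp only [crossP0, crossP1, crossP2, Pi.zero_apply]
  · linear_combination P 0 * h2 - Q 0 * h1
  · linear_combination P 1 * h2 - Q 1 * h1
  · linear_combination P 2 * h2 - Q 2 * h1

lemma crossP_eq_zero {K : Type*} [Field K] (n w : Fin 3 → K) (hn : n ≠ 0)
    (h : crossP w n = 0) : ∃ c : K, w = c • n := by
  have h0 : w 1 * n 2 - w 2 * n 1 = 0 := by rw [← crossP0 w n, h]; rfl
  have h1 : w 2 * n 0 - w 0 * n 2 = 0 := by rw [← crossP1 w n, h]; rfl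
  have h2 : w 0 * n 1 - w 1 * n 0 = 0 := by rw [← crossP2 w n, h]; rfl
  rcases vec3_ne_zero n hn with hk | hk | hk
  · refine ⟨w 0 / n 0, vec3_ext _ _ ?_ ?_ ?_⟩ <;> simp only [Pi.smul_apply, smul_eq_mul] <;>
      field_simp
    · linear_combination -h2
    · linear_combination h1
  · refine ⟨w 1 / n 1, vec3_ext _ _ ?_ ?_ ?_⟩ <;> simp only [Pi.smul_apply, smul_eq_mul] <;>
      field_simp
    · linear_combination h2
    · linear_combination -h0
  · refine ⟨w 2 / n 2, vec3_ext _ _ ?_ ?_ ?_⟩ <;> simp only [Pi.smul_apply, smul_eq_mul] <;>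
      field_simp
    · linear_combination -h1
    · linear_combination h0

/-- Cramer: if a × b ≠ 0 then the system a·v = z, b·v = w is solvable. -/
lemma cramer3 {K : Type*} [Field K] (a b : Fin 3 → K) (hn : crossP a b ≠ 0) (z w : K) :
    ∃ v : Fin 3 → K,
      a 0 * v 0 + a 1 * v 1 + a 2 * v 2 = z ∧
      b 0 * v 0 + b 1 * v 1 + b 2 * v 2 = w := by
  rcases vec3_ne_zero _ hn with hk | hk | hk
  · rw [crossP0] at hk
    refine ⟨![0, (z * b 2 - w * a 2) / (a 1 * b 2 - a 2 * b 1),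
      (w * a 1 - z * b 1) / (a 1 * b 2 - a 2 * b 1)], ?_, ?_⟩ <;>
    · simp only [Matrix.cons_val_zero, Matrix.cons_val_one, Matrix.head_cons,
        Matrix.cons_val_two, Matrix.tail_cons]
      simp only [mul_zero, zero_add, add_zero, mul_div_assoc', ← add_div, div_eq_iff hk]
      ring
  · rw [crossP1] at hk
    refine ⟨![(w * a 2 - z * b 2) / (a 2 * b 0 - a 0 * b 2), 0,
      (z * b 0 - w * a 0) / (a 2 * b 0 - a 0 * b 2)], ?_, ?_⟩ <;>
    · simp only [Matrix.cons_val_zero, Matrix.cons_val_one, Matrix.head_cons,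
        Matrix.cons_val_two, Matrix.tail_cons]
      simp only [mul_zero, zero_add, add_zero, mul_div_assoc', ← add_div, div_eq_iff hk]
      ring
  · rw [crossP2] at hk
    refine ⟨![(z * b 1 - w * a 1) / (a 0 * b 1 - a 1 * b 0),
      (w * a 0 - z * b 0) / (a 0 * b 1 - a 1 * b 0), 0], ?_, ?_⟩ <;>
    · simp only [Matrix.cons_val_zero, Matrix.cons_val_one, Matrix.head_cons,
        Matrix.cons_val_two, Matrix.tail_cons]
      simp only [mul_zero, zero_add, add_zero, mul_div_assoc', ← add_div, div_eq_iff hk]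
      ring

lemma fin2_finsupp_eq (m : Fin 2 →₀ ℕ) :
    m = Finsupp.single 0 (m 0) + Finsupp.single 1 (m 1) := by
  ext j
  fin_cases j <;> simp

lemma fin2_degree (m : Fin 2 →₀ ℕ) : m.degree = m 0 + m 1 := by
  rw [Finsupp.degree_apply]
  rw [Finset.sum_subset (Finset.subset_univ m.support)]
  · simp [Fin.sum_univ_two]
  · intro x _ hx
    simpa using (Finsupp.notMem_support_iff.mp hx)

/-- Representation of a homogeneous binary polynomial. -/
lemma homogBinary {K : Type*} [CommRing K] (n : ℕ) (f : MvPolynomial (Fin 2) K)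
    (hf : f.IsHomogeneous n) :
    f = ∑ i ∈ Finset.range (n + 1),
      C (coeff (Finsupp.single 0 (n - i) + Finsupp.single 1 i) f) * X 0 ^ (n - i) * X 1 ^ i := by
  have hmono : ∀ (c : K) (A B : ℕ),
      C c * (X (0:Fin 2)) ^ A * X 1 ^ B
        = monomial (Finsupp.single 0 A + Finsupp.single 1 B) c := by
    intro c A B
    rw [X_pow_eq_monomial, X_pow_eq_monomial, C_apply, monomial_mul, monomial_mul]
    simp
  apply MvPolynomial.ext
  intro m
  rw [MvPolynomial.coeff_sum]
  simp_rw [hmono, coeff_monomial]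
  by_cases hm : m 0 + m 1 = n
  · rw [Finset.sum_eq_single (m 1)]
    · rw [if_pos]
      · congr 1
        conv_lhs => rw [fin2_finsupp_eq m]
        congr 2
        omega
      · conv_rhs => rw [fin2_finsupp_eq m]
        congr 2
        omega
    · intro i _ hi
      rw [if_neg]
      intro hc
      have h1 := Finsupp.ext_iff.mp hc 1
      simp at h1
      exact hi h1
    · intro hmem
      exact absurd (Finset.mem_range.mpr (by omega)) hmem
  · rw [hf.coeff_eq_zero (by rw [fin2_degree]; omega)]
    symm
    apply Finset.sum_eq_zero
    intro i hi
    rw [if_neg]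
    intro hc
    have h0 := Finsupp.ext_iff.mp hc 0
    have h1 := Finsupp.ext_iff.mp hc 1
    simp at h0 h1
    simp only [Finset.mem_range] at hi
    omega

lemma aeval_eq_eval' {K : Type*} [CommSemiring K] (y : Fin 2 → K)
    (f : MvPolynomial (Fin 2) K) : aeval y f = eval y f := by
  rw [aeval_def, ← eval₂_id]
  congr 1

lemma eval_subst {K : Type*} [CommSemiring K] (y : Fin 2 → K)
    (σ : Fin 2 → MvPolynomial (Fin 2) K) (f : MvPolynomial (Fin 2) K) :
    eval y (aeval σ f) = eval (fun i => eval y (σ i)) f := by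
  rw [← aeval_eq_eval' y, show (aeval σ f : MvPolynomial (Fin 2) K) = bind₁ σ f from rfl,
    aeval_bind₁]
  simp_rw [aeval_eq_eval']

/-- substitution divisibility: (X 0 − s) ∣ f − f[X0 ↦ s]. -/
lemma subst_dvd0 {K : Type*} [CommRing K] (s : MvPolynomial (Fin 2) K)
    (f : MvPolynomial (Fin 2) K) :
    (X 0 - s) ∣ (f - aeval ![s, X 1] f) := by
  induction f using MvPolynomial.induction_on with
  | C a => simp
  | add f g hf hg =>
      have : f + g - aeval ![s, X 1] (f + g) =
          (f - aeval ![s, X 1] f) + (g - aeval ![s, X 1] g) := by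
        rw [map_add]; ring
      rw [this]
      exact dvd_add hf hg
  | mul_X f i hf =>
      rw [map_mul, aeval_X]
      by_cases h0 : i = 0
      · subst h0
        rw [Matrix.cons_val_zero]
        have : f * X 0 - aeval ![s, X 1] f * s =
            (f - aeval ![s, X 1] f) * X 0 + aeval ![s, X 1] f * (X 0 - s) := by ring
        rw [this]
        exact dvd_add (Dvd.dvd.mul_right hf _) (Dvd.dvd.mul_left dvd_rfl _)
      · have h1 : i = 1 := by omega
        subst h1
        rw [Matrix.cons_val_one, Matrix.cons_val_zero]
        have : f * X 1 - aeval ![s, X 1] f * X 1 =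
            (f - aeval ![s, X 1] f) * X 1 := by ring
        rw [this]
        exact Dvd.dvd.mul_right hf _

lemma subst_dvd1 {K : Type*} [CommRing K] (s : MvPolynomial (Fin 2) K)
    (f : MvPolynomial (Fin 2) K) :
    (X 1 - s) ∣ (f - aeval ![X 0, s] f) := by
  induction f using MvPolynomial.induction_on with
  | C a => simp
  | add f g hf hg =>
      have : f + g - aeval ![X 0, s] (f + g) =
          (f - aeval ![X 0, s] f) + (g - aeval ![X 0, s] g) := by
        rw [map_add]; ring
      rw [this]
      exact dvd_add hf hg
  | mul_X f i hf =>
      rw [map_mul, aeval_X]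
      by_cases h0 : i = 0
      · subst h0
        rw [Matrix.cons_val_zero]
        have : f * X 0 - aeval ![X 0, s] f * X 0 =
            (f - aeval ![X 0, s] f) * X 0 := by ring
        rw [this]
        exact Dvd.dvd.mul_right hf _
      · have h1 : i = 1 := by omega
        subst h1
        rw [Matrix.cons_val_one, Matrix.cons_val_zero]
        have : f * X 1 - aeval ![X 0, s] f * s =
            (f - aeval ![X 0, s] f) * X 1 + aeval ![X 0, s] f * (X 1 - s) := by ring
        rw [this]
        exact dvd_add (Dvd.dvd.mul_right hf _) (Dvd.dvd.mul_left dvd_rfl _)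

/-- a polynomial vanishing on the line through `x ≠ 0` is divisible by the line's equation. -/
lemma divLine {K : Type*} [Field K] [Infinite K] (x : Fin 2 → K) (hx : x ≠ 0)
    (f : MvPolynomial (Fin 2) K) (hf : ∀ t : K, eval (t • x) f = 0) :
    (C (x 1) * X 0 - C (x 0) * X 1) ∣ f := by
  by_cases hx1 : x 1 ≠ 0
  · set c := x 0 / x 1 with hc
    set σ : Fin 2 → MvPolynomial (Fin 2) K := ![C c * X 1, X 1] with hσ
    have hsub : aeval σ f = 0 := by
      apply (MvPolynomial.funext_iff).mpr
      intro y
      rw [map_zero, eval_subst]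
      have : (fun i => eval y (σ i)) = (y 1 / x 1) • x := by
        funext i
        fin_cases i <;>
          simp [hσ, Pi.smul_apply, smul_eq_mul, hc] <;> field_simp <;> ring
      rw [this, hf]
    have hdvd : (X 0 - C c * X 1) ∣ f := by
      have := subst_dvd0 (C c * X 1) f
      rw [show (![C c * X 1, X 1] : Fin 2 → MvPolynomial (Fin 2) K) = σ from rfl] at this
      rwa [hsub, sub_zero] at this
    obtain ⟨gq, hgq⟩ := hdvd
    refine ⟨C (x 1)⁻¹ * gq, ?_⟩
    rw [hgq]
    have h1 : (C (x 1) * X 0 - C (x 0) * X 1 : MvPolynomial (Fin 2) K)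
        = C (x 1) * (X 0 - C c * X 1) := by
      rw [mul_sub, ← mul_assoc, ← C_mul, hc]
      field_simp
    rw [h1]
    have h2 : C (x 1) * (X 0 - C c * X 1) * (C (x 1)⁻¹ * gq)
        = (C (x 1) * C (x 1)⁻¹) * ((X 0 - C c * X 1) * gq) := by ring
    rw [h2, ← C_mul, mul_inv_cancel₀ hx1, C_1, one_mul]
  · push_neg at hx1
    have hx0 : x 0 ≠ 0 := by
      intro h0
      exact hx (funext fun j => by fin_cases j <;> simp [h0, hx1])
    set c := x 1 / x 0 with hc
    set σ : Fin 2 → MvPolynomial (Fin 2) K := ![X 0, C c * X 0] with hσ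
    have hsub : aeval σ f = 0 := by
      apply (MvPolynomial.funext_iff).mpr
      intro y
      rw [map_zero, eval_subst]
      have : (fun i => eval y (σ i)) = (y 0 / x 0) • x := by
        funext i
        fin_cases i <;>
          simp [hσ, Pi.smul_apply, smul_eq_mul, hc] <;> field_simp <;> ring
      rw [this, hf]
    have hdvd : (X 1 - C c * X 0) ∣ f := by
      have := subst_dvd1 (C c * X 0) f
      rw [show (![X 0, C c * X 0] : Fin 2 → MvPolynomial (Fin 2) K) = σ from rfl] at this
      rwa [hsub, sub_zero] at this
    obtain ⟨gq, hgq⟩ := hdvd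
    refine ⟨C (- x 0)⁻¹ * gq, ?_⟩
    rw [hgq]
    have h1 : (C (x 1) * X 0 - C (x 0) * X 1 : MvPolynomial (Fin 2) K)
        = C (- x 0) * (X 1 - C c * X 0) := by
      rw [hc, hx1]
      simp [map_neg]
    rw [h1]
    have h2 : C (- x 0) * (X 1 - C c * X 0) * (C (- x 0)⁻¹ * gq)
        = (C (- x 0) * C (- x 0)⁻¹) * ((X 1 - C c * X 0) * gq) := by ring
    rw [h2, ← C_mul, mul_inv_cancel₀ (neg_ne_zero.mpr hx0), C_1, one_mul]

set_option linter.unreachableTactic false in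
set_option linter.unusedTactic false in
lemma sylDet {A : Type*} [CommRing A] : ∀ (n : ℕ) (U V : ℕ → A),
    (sylMatrix 1 n U V).det
      = ∑ i ∈ Finset.range (n + 1), (-1 : A) ^ (n - i) * V i * U 0 ^ i * U 1 ^ (n - i) := by
  intro n
  induction n with
  | zero =>
      intro U V
      have : (sylMatrix 1 0 U V).det = sylMatrix 1 0 U V 0 0 := Matrix.det_fin_one _
      rw [this]
      simp [sylMatrix]
  | succ m IH =>
      intro U V
      set M : Matrix (Fin (1+m+1)) (Fin (1+m+1)) A := sylMatrix 1 (m+1) U V with hM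
      have hdet := Matrix.det_succ_row_zero (n := 1 + m) M
      refine hdet.trans ?_
      have hpair : ({(0 : Fin (1+m+1)), Fin.last (1+m)} : Finset (Fin (1+m+1))) ⊆ Finset.univ :=
        Finset.subset_univ _
      rw [← Finset.sum_subset hpair ?side]
      case side =>
        intro j _ hj
        simp only [Finset.mem_insert, Finset.mem_singleton] at hj
        push_neg at hj
        have hj0 : (j : ℕ) ≠ 0 := fun h => hj.1 (Fin.ext h)
        have hjl : (j : ℕ) ≠ m + 1 := by
          intro h
          apply hj.2
          apply Fin.ext
          rw [Fin.val_last]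
          omega
        have hjb := j.isLt
        have hA : M 0 j = 0 := by
          simp only [hM, sylMatrix, Matrix.of_apply, Fin.val_zero]
          rw [if_pos (by omega)]; exact if_neg (by omega)
        rw [hA]
        ring
      have hne : (0 : Fin (1+m+1)) ≠ Fin.last (1+m) := by
        intro h
        have := Fin.ext_iff.mp h
        rw [Fin.val_zero, Fin.val_last] at this
        omega
      rw [Finset.sum_pair hne]
      have hA0 : M 0 0 = U 0 := by
        simp only [hM, sylMatrix, Matrix.of_apply]
        rw [if_pos (by simp), if_pos (by simp)]
        simp
      have hAl : M 0 (Fin.last (1+m)) = V 0 := by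
        simp only [hM, sylMatrix, Matrix.of_apply, Fin.val_last]
        rw [if_neg (by omega), if_pos (by omega)]
        simp
      have hM0 : M.submatrix Fin.succ ((0 : Fin (1+m+1)).succAbove)
          = sylMatrix 1 m U (fun k => V (k+1)) := by
        ext i j
        have hib := i.isLt
        have hjb := j.isLt
        simp only [Matrix.submatrix_apply, hM, sylMatrix, Matrix.of_apply, Fin.zero_succAbove,
          Fin.val_succ]
        split_ifs with h1 h2 h3 h4 h5 h6 <;> first | rfl | (congr 1; omega) | omega
      have hMl : (M.submatrix Fin.succ ((Fin.last (1+m)).succAbove)).det = U 1 ^ (1+m) := by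
        have htri : (M.submatrix Fin.succ ((Fin.last (1+m)).succAbove)).BlockTriangular id := by
          intro i j hij
          have hib := i.isLt
          have hjb := j.isLt
          have hij' : (j : ℕ) < (i : ℕ) := hij
          simp only [Matrix.submatrix_apply, hM, sylMatrix, Matrix.of_apply, Fin.succAbove_last,
            Fin.val_succ, Fin.coe_castSucc]
          rw [if_pos (by omega), if_neg (by omega)]
        rw [Matrix.det_of_upperTriangular htri]
        have hdiag : ∀ i : Fin (1+m),
            M.submatrix Fin.succ ((Fin.last (1+m)).succAbove) i i = U 1 := by
          intro i
          have hib := i.isLt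
          simp only [Matrix.submatrix_apply, hM, sylMatrix, Matrix.of_apply, Fin.succAbove_last,
            Fin.val_succ, Fin.coe_castSucc]
          rw [if_pos (by omega), if_pos (by omega)]
          congr 1
          omega
        calc ∏ i : Fin (1+m), M.submatrix Fin.succ ((Fin.last (1+m)).succAbove) i i
            = ∏ _i : Fin (1+m), U 1 := Finset.prod_congr rfl (fun i _ => hdiag i)
          _ = U 1 ^ (1+m) := by simp
      rw [hA0, hAl, hM0, hMl, IH]
      rw [Finset.sum_range_succ' _ (m+1)]
      simp only [Fin.val_zero, pow_zero, one_mul, Fin.val_last, Nat.succ_sub_succ_eq_sub,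
        Nat.sub_zero, pow_zero, mul_one]
      rw [Finset.mul_sum]
      congr 1
      · apply Finset.sum_congr rfl
        intro i hi
        ring
      · ring

namespace PolyAux

variable {K : Type*} [CommRing K]

lemma coeff1_mul (p q : Polynomial K) :
    (p * q).coeff 1 = p.coeff 0 * q.coeff 1 + p.coeff 1 * q.coeff 0 := by
  rw [Polynomial.coeff_mul]
  rw [Finset.Nat.sum_antidiagonal_eq_sum_range_succ_mk]
  simp [Finset.sum_range_succ]

lemma coeff0_mul3 (A B C : Polynomial K) :
    (A * B * C).coeff 0 = A.coeff 0 * B.coeff 0 * C.coeff 0 := by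
  simp [Polynomial.mul_coeff_zero]

lemma coeff1_mul3 (A B C : Polynomial K) :
    (A * B * C).coeff 1 =
      A.coeff 0 * B.coeff 0 * C.coeff 1 + A.coeff 0 * B.coeff 1 * C.coeff 0 +
        A.coeff 1 * B.coeff 0 * C.coeff 0 := by
  rw [coeff1_mul, coeff1_mul, Polynomial.mul_coeff_zero]
  ring

lemma coeff0_pow (x y : K) (i : ℕ) :
    ((Polynomial.C x + Polynomial.C y * Polynomial.X) ^ i).coeff 0 = x ^ i := by
  induction i with
  | zero => simp
  | succ n IH =>
      rw [pow_succ, Polynomial.mul_coeff_zero, IH]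
      simp [pow_succ]

lemma coeff1_pow (x y : K) (i : ℕ) :
    ((Polynomial.C x + Polynomial.C y * Polynomial.X) ^ i).coeff 1
      = (i : K) * x ^ (i - 1) * y := by
  induction i with
  | zero => simp [Polynomial.coeff_one]
  | succ n IH =>
      have c0 : (Polynomial.C x + Polynomial.C y * Polynomial.X).coeff 0 = x := by simp
      have c1 : (Polynomial.C x + Polynomial.C y * Polynomial.X).coeff 1 = y := by simp
      rw [pow_succ, coeff1_mul, IH, coeff0_pow, c0, c1]
      rcases Nat.eq_zero_or_pos n with hn | hn
      · subst hn; simp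
      · have h2 : n + 1 - 1 = n := by omega
        rw [h2]
        have h3 : x ^ (n - 1) * x = x ^ n := by
          rw [← pow_succ]; congr 1; omega
        push_cast
        linear_combination (n : K) * y * h3

/-- coefficient of a term `A * (Cα X)^i * (Cβ X)^k` with `i + k = n` below degree `n`. -/
lemma coeff_term_lt (A : Polynomial K) (α β : K) (i k n j : ℕ) (hik : i + k = n)
    (hj : j < n) :
    (A * (Polynomial.C α * Polynomial.X) ^ i * (Polynomial.C β * Polynomial.X) ^ k).coeff j
      = 0 := by
  have hT : A * (Polynomial.C α * Polynomial.X) ^ i * (Polynomial.C β * Polynomial.X) ^ k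
      = (A * Polynomial.C (α ^ i * β ^ k)) * Polynomial.X ^ n := by
    rw [mul_pow, mul_pow, ← Polynomial.C_pow, ← Polynomial.C_pow, ← hik, pow_add,
      Polynomial.C_mul]
    ring
  rw [hT, Polynomial.coeff_mul_X_pow', if_neg (by omega)]

lemma coeff_term_eq (A : Polynomial K) (α β : K) (i k n : ℕ) (hik : i + k = n) :
    (A * (Polynomial.C α * Polynomial.X) ^ i * (Polynomial.C β * Polynomial.X) ^ k).coeff n
      = A.coeff 0 * (α ^ i * β ^ k) := by
  have hT : A * (Polynomial.C α * Polynomial.X) ^ i * (Polynomial.C β * Polynomial.X) ^ k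
      = (A * Polynomial.C (α ^ i * β ^ k)) * Polynomial.X ^ n := by
    rw [mul_pow, mul_pow, ← Polynomial.C_pow, ← Polynomial.C_pow, ← hik, pow_add,
      Polynomial.C_mul]
    ring
  rw [hT, Polynomial.coeff_mul_X_pow', if_pos (le_refl n), Nat.sub_self,
    Polynomial.mul_coeff_zero, Polynomial.coeff_C_zero]

lemma sign_poly (k : ℕ) : ((-1 : Polynomial K) ^ k) = Polynomial.C ((-1 : K) ^ k) := by
  rw [← Polynomial.C_1, ← Polynomial.C_neg, ← Polynomial.C_pow]

lemma signlin_coeff0 (k : ℕ) (Wz Wv : K) :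
    ((-1 : Polynomial K) ^ k * (Polynomial.C Wz + Polynomial.C Wv * Polynomial.X)).coeff 0
      = (-1 : K) ^ k * Wz := by
  rw [sign_poly, Polynomial.coeff_C_mul]
  simp

lemma signlin_coeff1 (k : ℕ) (Wz Wv : K) :
    ((-1 : Polynomial K) ^ k * (Polynomial.C Wz + Polynomial.C Wv * Polynomial.X)).coeff 1
      = (-1 : K) ^ k * Wv := by
  rw [sign_poly, Polynomial.coeff_C_mul]
  simp

lemma termCoeff0 (k i : ℕ) (Wz Wv s av u bv : K) :
    ((-1 : Polynomial K) ^ k * (Polynomial.C Wz + Polynomial.C Wv * Polynomial.X) *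
      (Polynomial.C s + Polynomial.C av * Polynomial.X) ^ i *
      (Polynomial.C u + Polynomial.C bv * Polynomial.X) ^ k).coeff 0
    = (-1 : K) ^ k * Wz * s ^ i * u ^ k := by
  rw [coeff0_mul3, signlin_coeff0, coeff0_pow, coeff0_pow]

lemma termCoeff1 (k i : ℕ) (Wz Wv s av u bv : K) :
    ((-1 : Polynomial K) ^ k * (Polynomial.C Wz + Polynomial.C Wv * Polynomial.X) *
      (Polynomial.C s + Polynomial.C av * Polynomial.X) ^ i *
      (Polynomial.C u + Polynomial.C bv * Polynomial.X) ^ k).coeff 1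
    = (-1 : K) ^ k * Wz * s ^ i * ((k : K) * u ^ (k - 1) * bv)
      + (-1 : K) ^ k * Wz * ((i : K) * s ^ (i - 1) * av) * u ^ k
      + (-1 : K) ^ k * Wv * s ^ i * u ^ k := by
  rw [coeff1_mul3, signlin_coeff0, signlin_coeff1, coeff0_pow, coeff0_pow, coeff1_pow,
    coeff1_pow]

end PolyAux

lemma neg_one_pow_sub' {K : Type*} [CommRing K] (n i : ℕ) (h : i ≤ n) :
    (-1 : K) ^ (n - i) = (-1) ^ n * (-1) ^ i := by
  have h1 : (-1 : K) ^ (n - i) * (-1) ^ i = (-1) ^ n := by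
    rw [← pow_add]
    congr 1
    omega
  have h2 : ((-1 : K)) ^ i * (-1) ^ i = 1 := by
    rw [← mul_pow]
    norm_num
  calc (-1 : K) ^ (n - i) = (-1 : K) ^ (n - i) * (((-1 : K)) ^ i * (-1) ^ i) := by rw [h2, mul_one]
    _ = ((-1 : K) ^ (n - i) * (-1) ^ i) * (-1) ^ i := by ring
    _ = (-1) ^ n * (-1) ^ i := by rw [h1]

lemma neg_one_pow_mul_self {K : Type*} [CommRing K] (k : ℕ) : ((-1 : K)) ^ k * (-1) ^ k = 1 := by
  rw [← mul_pow]
  norm_num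

/-- aeval of a linear combination of the variables along the parametrized line. -/
lemma linAeval {K : Type*} [CommRing K] (c z v : Fin 3 → K) :
    aeval (fun i => Polynomial.C (z i) + Polynomial.C (v i) * Polynomial.X)
      (∑ i, MvPolynomial.C (c i) * MvPolynomial.X i : MvPolynomial (Fin 3) K)
    = Polynomial.C (c 0 * z 0 + c 1 * z 1 + c 2 * z 2)
      + Polynomial.C (c 0 * v 0 + c 1 * v 1 + c 2 * v 2) * Polynomial.X := by
  rw [map_sum, Fin.sum_univ_three]
  simp only [map_mul, aeval_C, aeval_X, Polynomial.algebraMap_eq, map_add, map_mul]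
  ring

set_option maxHeartbeats 2000000 in
/-- `μ = 1`, `d ≥ 3`. Let `φ : P¹ → P²`, `(X1:X2) ↦ (g1:g2:g3)`, with
`g1,g2,g3` homogeneous of degree `d ≥ 3` over an algebraically closed field, gcd a
nonzero constant, birational onto its image `C`, and let `(p,q)` be a `μ`-basis with
`μ = 1`, so `p = U0(T) X1 + U1(T) X2` with `U0, U1` linear forms in `K[T1,T2,T3]`.
Then the curve `C` — with implicit equation `Res_{X1:X2}(p,q) = 0`, multiplicity being
the order of vanishing of this equation — has a unique (proper) singular point `𝔭`
(unique up to the scalar ambiguity of homogeneous coordinates), this point has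
multiplicity exactly `d − 1`, and `U0(𝔭) = U1(𝔭) = 0`. -/
theorem stmt15 {K : Type*} [Field K] [IsAlgClosed K] (d : ℕ) (hd : 3 ≤ d)
    (g : Fin 3 → MvPolynomial (Fin 2) K)
    (hg : ∀ i, (g i).IsHomogeneous d)
    (hg0 : ¬ ∀ i, g i = 0)
    (hgcd : ∀ h : MvPolynomial (Fin 2) K, (∀ i, h ∣ g i) → IsUnit h)
    -- `φ` is birational onto its image: it is generically injective
    (hbir : ∃ Bad : Finset K, ∀ s ∉ Bad, ∀ t ∉ Bad,
      (∃ c : K, c ≠ 0 ∧ ∀ i, eval ![t, 1] (g i) = c * eval ![s, 1] (g i)) → s = t)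
    -- a `μ`-basis `(p, q)` with `μ = 1`
    (p q : Fin 3 → MvPolynomial (Fin 2) K)
    (hp : ∀ i, (p i).IsHomogeneous 1) (hq : ∀ i, (q i).IsHomogeneous (d - 1))
    (hpsyz : ∑ i, p i * g i = 0) (hqsyz : ∑ i, q i * g i = 0)
    (hgen : ∀ a : Fin 3 → MvPolynomial (Fin 2) K, ∑ i, a i * g i = 0 →
      ∃ c e : MvPolynomial (Fin 2) K, ∀ i, a i = c * p i + e * q i)
    (hindep : ∀ c e : MvPolynomial (Fin 2) K, (∀ i, c * p i + e * q i = 0) →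
      c = 0 ∧ e = 0)
    -- the coefficients of `p` and `q` as forms in `X1, X2` over `K[T1,T2,T3]`;
    -- in particular `U 0, U 1` are the linear forms `U0, U1` with `p = U0 X1 + U1 X2`
    (U V : ℕ → MvPolynomial (Fin 3) K)
    (hU : ∀ k, U k = ∑ i, C (coeff (Finsupp.single 0 (1 - k) + Finsupp.single 1 k) (p i)) * X i)
    (hV : ∀ k, V k = ∑ i, C (coeff (Finsupp.single 0 (d - 1 - k) + Finsupp.single 1 k) (q i)) * X i) :
    ∃ 𝔭 : Fin 3 → K, 𝔭 ≠ 0 ∧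
      multAtLeast (res 1 (d - 1) U V) 𝔭 (d - 1) ∧
      ¬ multAtLeast (res 1 (d - 1) U V) 𝔭 d ∧
      eval 𝔭 (U 0) = 0 ∧ eval 𝔭 (U 1) = 0 ∧
      ∀ 𝔮 : Fin 3 → K, 𝔮 ≠ 0 → multAtLeast (res 1 (d - 1) U V) 𝔮 2 →
        ∃ c : K, c ≠ 0 ∧ 𝔮 = c • 𝔭 := by
  classical
  obtain ⟨a, ha⟩ : ∃ a : Fin 3 → K,
      ∀ i, a i = coeff (Finsupp.single 0 1 + Finsupp.single 1 0) (p i) := ⟨_, fun _ => rfl⟩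
  obtain ⟨b, hb⟩ : ∃ b : Fin 3 → K,
      ∀ i, b i = coeff (Finsupp.single 0 0 + Finsupp.single 1 1) (p i) := ⟨_, fun _ => rfl⟩
  obtain ⟨Qc, hQc⟩ : ∃ Qc : Fin 3 → ℕ → K,
      ∀ j k, Qc j k = coeff (Finsupp.single 0 (d - 1 - k) + Finsupp.single 1 k) (q j) :=
    ⟨_, fun _ _ => rfl⟩
  have hprep : ∀ j, p j = C (a j) * X 0 + C (b j) * X 1 := by
    intro j
    have h1 := homogBinary 1 (p j) (hp j)
    rw [h1, Finset.sum_range_succ, Finset.sum_range_one]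
    rw [ha j, hb j]
    norm_num
  have hqrep : ∀ j, q j = ∑ k ∈ Finset.range d, C (Qc j k) * X 0 ^ (d - 1 - k) * X 1 ^ k := by
    intro j
    have h1 := homogBinary (d - 1) (q j) (hq j)
    have h2 : d - 1 + 1 = d := by omega
    rw [h2] at h1
    rw [h1]
    exact Finset.sum_congr rfl (fun k _ => by rw [hQc j k])
  have hU0' : U 0 = ∑ i, C (a i) * X i := by
    rw [hU 0]
    exact Finset.sum_congr rfl (fun i _ => by rw [ha i])
  have hU1' : U 1 = ∑ i, C (b i) * X i := by
    rw [hU 1]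
    exact Finset.sum_congr rfl (fun i _ => by rw [hb i])
  have hV' : ∀ k, V k = ∑ j, C (Qc j k) * X j := by
    intro k
    rw [hV k]
    exact Finset.sum_congr rfl (fun j _ => by rw [hQc j k])
  have hevalp : ∀ j (x : Fin 2 → K), eval x (p j) = a j * x 0 + b j * x 1 := by
    intro j x
    rw [hprep j]
    simp
  have hevalq : ∀ j (x : Fin 2 → K),
      eval x (q j) = ∑ k ∈ Finset.range d, Qc j k * x 0 ^ (d - 1 - k) * x 1 ^ k := by
    intro j x
    rw [hqrep j]
    simp
  have hU0e : ∀ y : Fin 3 → K, eval y (U 0) = a 0 * y 0 + a 1 * y 1 + a 2 * y 2 := by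
    intro y
    rw [hU0', map_sum, Fin.sum_univ_three]
    simp
  have hU1e : ∀ y : Fin 3 → K, eval y (U 1) = b 0 * y 0 + b 1 * y 1 + b 2 * y 2 := by
    intro y
    rw [hU1', map_sum, Fin.sum_univ_three]
    simp
  have hVe : ∀ (k : ℕ) (y : Fin 3 → K),
      eval y (V k) = Qc 0 k * y 0 + Qc 1 k * y 1 + Qc 2 k * y 2 := by
    intro k y
    rw [hV' k, map_sum, Fin.sum_univ_three]
    simp
  have hscalep : ∀ j (t : K) (x : Fin 2 → K), eval (t • x) (p j) = t * eval x (p j) := by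
    intro j t x
    rw [hevalp, hevalp]
    simp only [Pi.smul_apply, smul_eq_mul]
    ring
  have hscaleq : ∀ j (t : K) (x : Fin 2 → K),
      eval (t • x) (q j) = t ^ (d - 1) * eval x (q j) := by
    intro j t x
    rw [hevalq, hevalq, Finset.mul_sum]
    apply Finset.sum_congr rfl
    intro k hk
    simp only [Pi.smul_apply, smul_eq_mul, mul_pow]
    have h1 : t ^ (d - 1 - k) * t ^ k = t ^ (d - 1) := by
      rw [← pow_add]
      congr 1
      simp only [Finset.mem_range] at hk
      omega
    linear_combination (Qc j k * x 0 ^ (d - 1 - k) * x 1 ^ k) * h1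
  have hsyzP : ∀ x : Fin 2 → K,
      eval x (p 0) * eval x (g 0) + eval x (p 1) * eval x (g 1)
        + eval x (p 2) * eval x (g 2) = 0 := by
    intro x
    have h1 := congrArg (eval x) hpsyz
    rw [map_sum, map_zero, Fin.sum_univ_three] at h1
    simpa [map_mul] using h1
  have hsyzQ : ∀ x : Fin 2 → K,
      eval x (q 0) * eval x (g 0) + eval x (q 1) * eval x (g 1)
        + eval x (q 2) * eval x (g 2) = 0 := by
    intro x
    have h1 := congrArg (eval x) hqsyz
    rw [map_sum, map_zero, Fin.sum_univ_three] at h1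
    simpa [map_mul] using h1
  -- ============ the key pointwise independence lemma ============
  have hkey : ∀ x : Fin 2 → K, x ≠ 0 → ∀ α β : K,
      (∀ j, α * eval x (p j) + β * eval x (q j) = 0) → α = 0 ∧ β = 0 := by
    intro x hx α β hrel
    set ℓ : MvPolynomial (Fin 2) K := C (x 1) * X 0 - C (x 0) * X 1 with hℓ
    have hℓ0 : eval x ℓ = 0 := by
      rw [hℓ]
      simp only [map_sub, map_mul, eval_C, eval_X]
      ring
    have hℓne : ℓ ≠ 0 := by
      intro h0
      rcases vec2_ne_zero x hx with h | h
      · have h1 : eval ![0, -1] ℓ = 0 := by rw [h0, map_zero]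
        rw [hℓ] at h1
        simp only [map_sub, map_mul, eval_C, eval_X, Matrix.cons_val_zero, Matrix.cons_val_one,
          Matrix.head_cons] at h1
        apply h
        linear_combination h1
      · have h1 : eval ![1, 0] ℓ = 0 := by rw [h0, map_zero]
        rw [hℓ] at h1
        simp only [map_sub, map_mul, eval_C, eval_X, Matrix.cons_val_zero, Matrix.cons_val_one,
          Matrix.head_cons] at h1
        apply h
        linear_combination h1
    have hdiv : ∀ F : Fin 3 → MvPolynomial (Fin 2) K,
        (∀ j, ∀ t : K, eval (t • x) (F j) = 0) → (∑ j, F j * g j = 0) →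
        ∃ c e : MvPolynomial (Fin 2) K, ∀ j, F j = ℓ * (c * p j + e * q j) := by
      intro F hvan hsyzF
      have hdvd : ∀ j, ℓ ∣ F j := fun j => by rw [hℓ]; exact divLine x hx _ (hvan j)
      choose r hr using hdvd
      have hℓr : ℓ * (∑ j, r j * g j) = 0 := by
        calc ℓ * ∑ j, r j * g j = ∑ j, (ℓ * r j) * g j := by
              rw [Finset.mul_sum]
              exact Finset.sum_congr rfl (fun j _ => by ring)
          _ = ∑ j, F j * g j := Finset.sum_congr rfl (fun j _ => by rw [← hr j])
          _ = 0 := hsyzF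
      have hrsyz : ∑ j, r j * g j = 0 := by
        rcases mul_eq_zero.mp hℓr with h | h
        · exact absurd h hℓne
        · exact h
      obtain ⟨c, e, hce⟩ := hgen r hrsyz
      exact ⟨c, e, fun j => by rw [hr j, hce j]⟩
    have hpnz : ∃ j, eval x (p j) ≠ 0 := by
      by_contra hcon
      push_neg at hcon
      obtain ⟨c, e, hce⟩ := hdiv p (fun j t => by rw [hscalep, hcon j, mul_zero]) hpsyz
      have hfin : ∀ j, (ℓ * c - 1) * p j + (ℓ * e) * q j = 0 := by
        intro j
        linear_combination (-1 : MvPolynomial (Fin 2) K) * hce j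
      have h1 := (hindep _ _ hfin).1
      have h2 := congrArg (eval x) h1
      rw [map_sub, map_mul, hℓ0, map_one, map_zero, zero_mul, zero_sub] at h2
      exact one_ne_zero (neg_eq_zero.mp h2)
    obtain ⟨j0, hj0⟩ := hpnz
    by_cases hβ : β = 0
    · subst hβ
      refine ⟨?_, rfl⟩
      have h1 := hrel j0
      rw [zero_mul, add_zero] at h1
      exact (mul_eq_zero.mp h1).resolve_right hj0
    · exfalso
      have hq' : ∀ j, eval x (q j) = (-α / β) * eval x (p j) := by
        intro j
        have h1 := hrel j
        rw [div_mul_eq_mul_div, eq_div_iff hβ]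
        linear_combination h1
      have hmaincase : ∀ κ : Fin 2, x κ ≠ 0 →
          (∀ t : K, eval (t • x) ((C ((-α / β) / x κ ^ (d - 2)) * X κ ^ (d - 2)
            : MvPolynomial (Fin 2) K)) = (-α / β) * t ^ (d - 2)) → False := by
        intro κ hκ hevalm
        set m : MvPolynomial (Fin 2) K := C ((-α / β) / x κ ^ (d - 2)) * X κ ^ (d - 2) with hm
        have hvan : ∀ j, ∀ t : K, eval (t • x) (q j - m * p j) = 0 := by
          intro j t
          rw [map_sub, map_mul, hscaleq, hscalep, hevalm, hq' j]
          have hp1 : t ^ (d - 2) * t = t ^ (d - 1) := by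
            rw [← pow_succ]
            congr 1
            omega
          linear_combination (-((-α / β) * eval x (p j))) * hp1
        have hsyzF : ∑ j, (q j - m * p j) * g j = 0 := by
          have h1 : ∑ j, (q j - m * p j) * g j = ∑ j, q j * g j - m * ∑ j, p j * g j := by
            rw [Finset.mul_sum, ← Finset.sum_sub_distrib]
            exact Finset.sum_congr rfl (fun j _ => by ring)
          rw [h1, hqsyz, hpsyz, mul_zero, sub_zero]
        obtain ⟨c, e, hce⟩ := hdiv _ hvan hsyzF
        have hfin : ∀ j, (m + ℓ * c) * p j + (ℓ * e - 1) * q j = 0 := by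
          intro j
          linear_combination (-1 : MvPolynomial (Fin 2) K) * hce j
        have h1 := (hindep _ _ hfin).2
        have h2 := congrArg (eval x) h1
        rw [map_sub, map_mul, hℓ0, map_one, map_zero, zero_mul, zero_sub] at h2
        exact one_ne_zero (neg_eq_zero.mp h2)
      rcases vec2_ne_zero x hx with hx0 | hx1
      · refine hmaincase 0 hx0 ?_
        intro t
        simp only [map_mul, eval_C, map_pow, eval_X, Pi.smul_apply, smul_eq_mul, mul_pow]
        have hx0p : x 0 ^ (d - 2) ≠ 0 := pow_ne_zero _ hx0
        field_simp
      · refine hmaincase 1 hx1 ?_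
        intro t
        simp only [map_mul, eval_C, map_pow, eval_X, Pi.smul_apply, smul_eq_mul, mul_pow]
        have hx1p : x 1 ^ (d - 2) ≠ 0 := pow_ne_zero _ hx1
        field_simp
  -- ============ the distinguished point ============
  have hcross : crossP a b ≠ 0 := by
    intro hc
    obtain ⟨x, hxne, hxab⟩ : ∃ x : Fin 2 → K, x ≠ 0 ∧ ∀ j, a j * x 0 + b j * x 1 = 0 := by
      by_cases hA : a = 0
      · refine ⟨![1, 0], ?_, ?_⟩
        · intro h
          have h1 := congrFun h 0
          simp at h1
        · intro j
          rw [hA]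
          simp
      · have hba : crossP b a = 0 := by
          refine vec3_ext _ _ ?_ ?_ ?_ <;>
            simp only [crossP0, crossP1, crossP2, Pi.zero_apply]
          · have h1 := congrFun hc 0
            rw [crossP0] at h1
            simp only [Pi.zero_apply] at h1
            linear_combination -h1
          · have h1 := congrFun hc 1
            rw [crossP1] at h1
            simp only [Pi.zero_apply] at h1
            linear_combination -h1
          · have h1 := congrFun hc 2
            rw [crossP2] at h1
            simp only [Pi.zero_apply] at h1
            linear_combination -h1
        obtain ⟨lam, hlam⟩ := crossP_eq_zero a b hA hba
        refine ⟨![lam, -1], ?_, ?_⟩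
        · intro h
          have h1 := congrFun h 1
          simp at h1
        · intro j
          have hbj := congrFun hlam j
          simp only [Pi.smul_apply, smul_eq_mul] at hbj
          simp only [Matrix.cons_val_zero, Matrix.cons_val_one, Matrix.head_cons]
          rw [hbj]
          ring
    have h1 := hkey x hxne 1 0 (fun j => by
      rw [hevalp]
      linear_combination hxab j)
    exact one_ne_zero h1.1
  set 𝔭v : Fin 3 → K := crossP a b with h𝔭v
  have h𝔭ne : 𝔭v ≠ 0 := by rw [h𝔭v]; exact hcross
  have hdotA : a 0 * 𝔭v 0 + a 1 * 𝔭v 1 + a 2 * 𝔭v 2 = 0 := by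
    simp only [h𝔭v, crossP0, crossP1, crossP2]
    ring
  have hdotB : b 0 * 𝔭v 0 + b 1 * 𝔭v 1 + b 2 * 𝔭v 2 = 0 := by
    simp only [h𝔭v, crossP0, crossP1, crossP2]
    ring
  have hU0𝔭 : eval 𝔭v (U 0) = 0 := by rw [hU0e]; exact hdotA
  have hU1𝔭 : eval 𝔭v (U 1) = 0 := by rw [hU1e]; exact hdotB
  set hpol : MvPolynomial (Fin 2) K := C (𝔭v 0) * q 0 + C (𝔭v 1) * q 1 + C (𝔭v 2) * q 2
    with hhpol
  have hhe : ∀ y : Fin 2 → K,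
      eval y hpol = 𝔭v 0 * eval y (q 0) + 𝔭v 1 * eval y (q 1) + 𝔭v 2 * eval y (q 2) := by
    intro y
    rw [hhpol]
    simp
  -- ============ nonvanishing of hpol via birationality ============
  have hpolne : hpol ≠ 0 := by
    intro hzero
    have hgpar : ∀ x : Fin 2 → K, x ≠ 0 → ∃ c : K, ∀ j, eval x (g j) = c * 𝔭v j := by
      intro x hx
      have hPQn : crossP (fun j => eval x (p j)) (fun j => eval x (q j)) ≠ 0 := by
        intro h0
        by_cases hP : (fun j => eval x (p j)) = (0 : Fin 3 → K)
        · have h1 := hkey x hx 1 0 (fun j => by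
            have h2 := congrFun hP j
            simp only [Pi.zero_apply] at h2
            rw [h2]
            ring)
          exact one_ne_zero h1.1
        · have hQP : crossP (fun j => eval x (q j)) (fun j => eval x (p j)) = 0 := by
            refine vec3_ext _ _ ?_ ?_ ?_ <;>
              simp only [crossP0, crossP1, crossP2, Pi.zero_apply]
            · have h1 := congrFun h0 0
              rw [crossP0] at h1
              simp only [Pi.zero_apply] at h1
              linear_combination -h1
            · have h1 := congrFun h0 1
              rw [crossP1] at h1
              simp only [Pi.zero_apply] at h1
              linear_combination -h1
            · have h1 := congrFun h0 2
              rw [crossP2] at h1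
              simp only [Pi.zero_apply] at h1
              linear_combination -h1
          obtain ⟨lam, hlam⟩ := crossP_eq_zero _ _ hP hQP
          have h1 := hkey x hx lam (-1) (fun j => by
            have h2 := congrFun hlam j
            simp only [Pi.smul_apply, smul_eq_mul] at h2
            linear_combination -h2)
          have h2 := h1.2
          norm_num at h2
      have hd3 : 𝔭v 0 * eval x (p 0) + 𝔭v 1 * eval x (p 1) + 𝔭v 2 * eval x (p 2) = 0 := by
        rw [hevalp, hevalp, hevalp]
        simp only [h𝔭v, crossP0, crossP1, crossP2]
        ring
      have hd4 : 𝔭v 0 * eval x (q 0) + 𝔭v 1 * eval x (q 1) + 𝔭v 2 * eval x (q 2) = 0 := by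
        have h1 : eval x hpol = 0 := by rw [hzero, map_zero]
        rw [hhe] at h1
        exact h1
      have hz1 := cross_triple (fun j => eval x (p j)) (fun j => eval x (q j)) 𝔭v hd3 hd4
      have hz2 := cross_triple (fun j => eval x (p j)) (fun j => eval x (q j))
        (fun j => eval x (g j)) (by linear_combination hsyzP x) (by linear_combination hsyzQ x)
      obtain ⟨c1, hc1⟩ := crossP_eq_zero _ 𝔭v hPQn hz1
      obtain ⟨c2, hc2⟩ := crossP_eq_zero _ _ hPQn hz2
      have hc1ne : c1 ≠ 0 := by
        intro hz
        rw [hz, zero_smul] at hc1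
        exact h𝔭ne hc1
      refine ⟨c2 / c1, fun j => ?_⟩
      have e1 := congrFun hc1 j
      have e2 := congrFun hc2 j
      simp only [Pi.smul_apply, smul_eq_mul] at e1 e2
      rw [e2, e1]
      field_simp
    obtain ⟨i0, hgi0⟩ : ∃ i, g i ≠ 0 := by
      by_contra hcon
      push_neg at hcon
      exact hg0 (fun i => hcon i)
    obtain ⟨Gc, hGc⟩ : ∃ Gc : ℕ → K,
        ∀ k, Gc k = coeff (Finsupp.single 0 (d - k) + Finsupp.single 1 k) (g i0) :=
      ⟨_, fun _ => rfl⟩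
    have hgrep' : g i0 = ∑ k ∈ Finset.range (d + 1), C (Gc k) * X 0 ^ (d - k) * X 1 ^ k := by
      have h1 := homogBinary d (g i0) (hg i0)
      rw [h1]
      exact Finset.sum_congr rfl (fun k _ => by rw [hGc k])
    obtain ⟨k0, hk0⟩ : ∃ k, Gc k ≠ 0 := by
      by_contra hcon
      push_neg at hcon
      apply hgi0
      rw [hgrep']
      apply Finset.sum_eq_zero
      intro k _
      rw [hcon k, map_zero, zero_mul, zero_mul]
    have hk0d : k0 ≤ d := by
      by_contra hgt
      push_neg at hgt
      apply hk0
      rw [hGc k0]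
      apply (hg i0).coeff_eq_zero
      rw [fin2_degree]
      simp only [Finsupp.add_apply, Finsupp.single_apply]
      norm_num
      omega
    set P : Polynomial K := ∑ k ∈ Finset.range (d + 1), Polynomial.C (Gc k) * Polynomial.X ^ (d - k)
      with hP
    have hPev : ∀ t : K, P.eval t = eval ![t, 1] (g i0) := by
      intro t
      rw [hP, hgrep', Polynomial.eval_finset_sum, map_sum]
      apply Finset.sum_congr rfl
      intro k _
      simp
    have hPne : P ≠ 0 := by
      intro h0
      apply hk0
      have hco : P.coeff (d - k0) = Gc k0 := by
        rw [hP, Polynomial.finset_sum_coeff]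
        rw [Finset.sum_eq_single k0]
        · rw [Polynomial.coeff_C_mul, Polynomial.coeff_X_pow, if_pos rfl, mul_one]
        · intro k hk hkne
          rw [Polynomial.coeff_C_mul, Polynomial.coeff_X_pow, if_neg, mul_zero]
          simp only [Finset.mem_range] at hk
          omega
        · intro hmem
          exact absurd (Finset.mem_range.mpr (by omega)) hmem
      rw [h0, Polynomial.coeff_zero] at hco
      exact hco.symm
    obtain ⟨Bad, hBad⟩ := hbir
    have hSfin : ((↑Bad : Set K) ∪ {t : K | P.IsRoot t}).Finite :=
      (Bad.finite_toSet).union (Polynomial.finite_setOf_isRoot hPne)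
    have hcompl : ((↑Bad : Set K) ∪ {t : K | P.IsRoot t})ᶜ.Infinite := hSfin.infinite_compl
    obtain ⟨s0, hs0⟩ := hcompl.nonempty
    obtain ⟨t0, ht0mem, ht0ne⟩ :
        ∃ t0, t0 ∈ ((↑Bad : Set K) ∪ {t : K | P.IsRoot t})ᶜ ∧ t0 ≠ s0 := by
      have h1 := hcompl.diff (Set.finite_singleton s0)
      obtain ⟨t0, ht0⟩ := h1.nonempty
      exact ⟨t0, ht0.1, by simpa using ht0.2⟩
    simp only [Set.mem_compl_iff, Set.mem_union, Set.mem_setOf_eq, not_or] at hs0 ht0mem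
    have hs1 : eval ![s0, 1] (g i0) ≠ 0 := by
      rw [← hPev]
      exact hs0.2
    have ht1 : eval ![t0, 1] (g i0) ≠ 0 := by
      rw [← hPev]
      exact ht0mem.2
    obtain ⟨cs, hcs⟩ := hgpar ![s0, 1] (by
      intro h
      have h1 := congrFun h 1
      simp at h1)
    obtain ⟨ct, hct⟩ := hgpar ![t0, 1] (by
      intro h
      have h1 := congrFun h 1
      simp at h1)
    have hcsne : cs ≠ 0 := by
      intro h0
      apply hs1
      rw [hcs i0, h0, zero_mul]
    have hctne : ct ≠ 0 := by
      intro h0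
      apply ht1
      rw [hct i0, h0, zero_mul]
    have hfinal := hBad s0 hs0.1 t0 ht0mem.1 ⟨ct / cs, div_ne_zero hctne hcsne, fun i => by
      rw [hct i, hcs i]
      field_simp⟩
    exact ht0ne hfinal.symm
  -- ============ resultant formula and aeval expansions ============
  have hres : res 1 (d - 1) U V
      = ∑ i ∈ Finset.range d,
        (-1 : MvPolynomial (Fin 3) K) ^ (d - 1 - i) * V i * U 0 ^ i * U 1 ^ (d - 1 - i) := by
    have h1 := sylDet (d - 1) U V
    have h2 : d - 1 + 1 = d := by omega
    rw [h2] at h1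
    exact h1
  have haevalU0 : ∀ z v : Fin 3 → K,
      aeval (fun i => Polynomial.C (z i) + Polynomial.C (v i) * Polynomial.X) (U 0)
        = Polynomial.C (eval z (U 0)) + Polynomial.C (eval v (U 0)) * Polynomial.X := by
    intro z v
    rw [hU0e z, hU0e v, hU0', linAeval]
  have haevalU1 : ∀ z v : Fin 3 → K,
      aeval (fun i => Polynomial.C (z i) + Polynomial.C (v i) * Polynomial.X) (U 1)
        = Polynomial.C (eval z (U 1)) + Polynomial.C (eval v (U 1)) * Polynomial.X := by
    intro z v
    rw [hU1e z, hU1e v, hU1', linAeval]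
  have haevalV : ∀ (k : ℕ) (z v : Fin 3 → K),
      aeval (fun i => Polynomial.C (z i) + Polynomial.C (v i) * Polynomial.X) (V k)
        = Polynomial.C (eval z (V k)) + Polynomial.C (eval v (V k)) * Polynomial.X := by
    intro k z v
    rw [hVe k z, hVe k v, hV' k, linAeval]
  have hTfact : ∀ (s u : K) (j : Fin 3),
      ∑ i ∈ Finset.range d, (-1 : K) ^ (d - 1 - i) * Qc j i * s ^ i * u ^ (d - 1 - i)
        = (-1 : K) ^ (d - 1) * eval ![u, -s] (q j) := by
    intro s u j
    rw [hevalq, Finset.mul_sum]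
    apply Finset.sum_congr rfl
    intro i hi
    simp only [Finset.mem_range] at hi
    rw [neg_one_pow_sub' (d - 1) i (by omega)]
    simp only [Matrix.cons_val_zero, Matrix.cons_val_one, Matrix.head_cons]
    rw [neg_pow]
    ring
  -- ============ multiplicity at least d-1 ============
  have hmult1 : multAtLeast (res 1 (d - 1) U V) 𝔭v (d - 1) := by
    intro v j hj
    rw [hres, map_sum, Polynomial.finset_sum_coeff]
    apply Finset.sum_eq_zero
    intro i hi
    simp only [map_mul, map_pow, map_neg, map_one]
    rw [haevalV, haevalU0, haevalU1, hU0𝔭, hU1𝔭, Polynomial.C_0, zero_add, zero_add]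
    exact PolyAux.coeff_term_lt _ _ _ i (d - 1 - i) (d - 1) j
      (by simp only [Finset.mem_range] at hi; omega) hj
  -- ============ multiplicity exactly d-1 ============
  have hmult2 : ¬ multAtLeast (res 1 (d - 1) U V) 𝔭v d := by
    intro hml
    obtain ⟨y, hy⟩ : ∃ y : Fin 2 → K, eval y hpol ≠ 0 := by
      by_contra hcon
      push_neg at hcon
      exact hpolne (MvPolynomial.funext (fun y => by rw [hcon y, map_zero]))
    obtain ⟨v, hv1, hv2⟩ := cramer3 a b hcross (-(y 1)) (y 0)
    have hev0 : eval v (U 0) = -(y 1) := by rw [hU0e]; exact hv1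
    have hev1 : eval v (U 1) = y 0 := by rw [hU1e]; exact hv2
    have hc := hml v (d - 1) (by omega)
    rw [hres, map_sum, Polynomial.finset_sum_coeff] at hc
    have hc' : ∑ i ∈ Finset.range d, (-1 : K) ^ (d - 1 - i) * eval 𝔭v (V i)
        * (eval v (U 0)) ^ i * (eval v (U 1)) ^ (d - 1 - i) = 0 := by
      refine Eq.trans (Finset.sum_congr rfl (fun i hi => ?_)) hc
      symm
      simp only [map_mul, map_pow, map_neg, map_one]
      rw [haevalV, haevalU0, haevalU1, hU0𝔭, hU1𝔭, Polynomial.C_0, zero_add, zero_add]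
      rw [PolyAux.coeff_term_eq _ _ _ i (d - 1 - i) (d - 1)
        (by simp only [Finset.mem_range] at hi; omega)]
      rw [PolyAux.signlin_coeff0]
      ring
    rw [hev0, hev1] at hc'
    have h1 : ∑ i ∈ Finset.range d, (-1 : K) ^ (d - 1 - i) * eval 𝔭v (V i)
        * (-(y 1)) ^ i * (y 0) ^ (d - 1 - i)
        = 𝔭v 0 * ((-1 : K) ^ (d - 1) * eval ![y 0, -(-(y 1))] (q 0))
          + 𝔭v 1 * ((-1 : K) ^ (d - 1) * eval ![y 0, -(-(y 1))] (q 1))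
          + 𝔭v 2 * ((-1 : K) ^ (d - 1) * eval ![y 0, -(-(y 1))] (q 2)) := by
      rw [← hTfact (-(y 1)) (y 0) 0, ← hTfact (-(y 1)) (y 0) 1, ← hTfact (-(y 1)) (y 0) 2]
      rw [Finset.mul_sum, Finset.mul_sum, Finset.mul_sum, ← Finset.sum_add_distrib,
        ← Finset.sum_add_distrib]
      exact Finset.sum_congr rfl (fun i hi => by rw [hVe]; ring)
    rw [h1] at hc'
    have h2 : (![y 0, -(-(y 1))] : Fin 2 → K) = y := by
      rw [neg_neg]
      exact vec2_eta y
    rw [h2] at hc'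
    have h3 : 𝔭v 0 * ((-1 : K) ^ (d - 1) * eval y (q 0))
        + 𝔭v 1 * ((-1 : K) ^ (d - 1) * eval y (q 1))
        + 𝔭v 2 * ((-1 : K) ^ (d - 1) * eval y (q 2))
        = (-1 : K) ^ (d - 1) * eval y hpol := by
      rw [hhe]
      ring
    rw [h3] at hc'
    rcases mul_eq_zero.mp hc' with h | h
    · exact pow_ne_zero _ (neg_ne_zero.mpr one_ne_zero) h
    · exact hy h
  -- ============ uniqueness ============
  have huniq : ∀ 𝔮 : Fin 3 → K, 𝔮 ≠ 0 → multAtLeast (res 1 (d - 1) U V) 𝔮 2 →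
      ∃ c : K, c ≠ 0 ∧ 𝔮 = c • 𝔭v := by
    intro 𝔮 h𝔮 hml
    have hF0 : ∑ i ∈ Finset.range d, (-1 : K) ^ (d - 1 - i) * eval 𝔮 (V i)
        * eval 𝔮 (U 0) ^ i * eval 𝔮 (U 1) ^ (d - 1 - i) = 0 := by
      have hc := hml 0 0 (by omega)
      rw [hres, map_sum, Polynomial.finset_sum_coeff] at hc
      refine Eq.trans (Finset.sum_congr rfl (fun i hi => ?_)) hc
      symm
      simp only [map_mul, map_pow, map_neg, map_one]
      rw [haevalV, haevalU0, haevalU1]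
      rw [PolyAux.termCoeff0]
    have hcond2 : ∀ v : Fin 3 → K,
        eval v (U 1) * (∑ i ∈ Finset.range d, (-1 : K) ^ (d - 1 - i) * eval 𝔮 (V i)
            * eval 𝔮 (U 0) ^ i * (((d - 1 - i : ℕ) : K) * eval 𝔮 (U 1) ^ (d - 1 - i - 1)))
          + eval v (U 0) * (∑ i ∈ Finset.range d, (-1 : K) ^ (d - 1 - i) * eval 𝔮 (V i)
            * (((i : ℕ) : K) * eval 𝔮 (U 0) ^ (i - 1)) * eval 𝔮 (U 1) ^ (d - 1 - i))
          + ∑ i ∈ Finset.range d, (-1 : K) ^ (d - 1 - i) * eval v (V i)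
            * eval 𝔮 (U 0) ^ i * eval 𝔮 (U 1) ^ (d - 1 - i) = 0 := by
      intro v
      have hc := hml v 1 (by omega)
      rw [hres, map_sum, Polynomial.finset_sum_coeff] at hc
      have hterm : ∑ i ∈ Finset.range d,
          ((-1 : K) ^ (d - 1 - i) * eval 𝔮 (V i) * eval 𝔮 (U 0) ^ i
              * (((d - 1 - i : ℕ) : K) * eval 𝔮 (U 1) ^ (d - 1 - i - 1) * eval v (U 1))
            + (-1 : K) ^ (d - 1 - i) * eval 𝔮 (V i)
              * (((i : ℕ) : K) * eval 𝔮 (U 0) ^ (i - 1) * eval v (U 0)) * eval 𝔮 (U 1) ^ (d - 1 - i)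
            + (-1 : K) ^ (d - 1 - i) * eval v (V i) * eval 𝔮 (U 0) ^ i * eval 𝔮 (U 1) ^ (d - 1 - i)) = 0 := by
        refine Eq.trans (Finset.sum_congr rfl (fun i hi => ?_)) hc
        symm
        simp only [map_mul, map_pow, map_neg, map_one]
        rw [haevalV, haevalU0, haevalU1]
        rw [PolyAux.termCoeff1]
      refine Eq.trans ?_ hterm
      rw [Finset.mul_sum, Finset.mul_sum, ← Finset.sum_add_distrib, ← Finset.sum_add_distrib]
      exact Finset.sum_congr rfl (fun i hi => by ring)
    have hbasis : ∀ kc : Fin 3,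
        b kc * (∑ i ∈ Finset.range d, (-1 : K) ^ (d - 1 - i) * eval 𝔮 (V i)
            * eval 𝔮 (U 0) ^ i * (((d - 1 - i : ℕ) : K) * eval 𝔮 (U 1) ^ (d - 1 - i - 1)))
          + a kc * (∑ i ∈ Finset.range d, (-1 : K) ^ (d - 1 - i) * eval 𝔮 (V i)
            * (((i : ℕ) : K) * eval 𝔮 (U 0) ^ (i - 1)) * eval 𝔮 (U 1) ^ (d - 1 - i))
          + ∑ i ∈ Finset.range d, (-1 : K) ^ (d - 1 - i) * Qc kc i
            * eval 𝔮 (U 0) ^ i * eval 𝔮 (U 1) ^ (d - 1 - i) = 0 := by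
      intro kc
      have h1 := hcond2 (Pi.single kc 1)
      have e0 : eval (Pi.single kc (1 : K)) (U 0) = a kc := by
        rw [hU0e]
        fin_cases kc <;> simp
      have e1 : eval (Pi.single kc (1 : K)) (U 1) = b kc := by
        rw [hU1e]
        fin_cases kc <;> simp
      have e2 : ∀ i, eval (Pi.single kc (1 : K)) (V i) = Qc kc i := by
        intro i
        rw [hVe]
        fin_cases kc <;> simp
      rw [e0, e1] at h1
      refine Eq.trans ?_ h1
      congr 1
      exact Finset.sum_congr rfl (fun i hi => by rw [e2 i])
    have hF0' : 𝔮 0 * eval ![eval 𝔮 (U 1), -eval 𝔮 (U 0)] (q 0) + 𝔮 1 * eval ![eval 𝔮 (U 1), -eval 𝔮 (U 0)] (q 1)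
        + 𝔮 2 * eval ![eval 𝔮 (U 1), -eval 𝔮 (U 0)] (q 2) = 0 := by
      have h1 : ∑ i ∈ Finset.range d, (-1 : K) ^ (d - 1 - i) * eval 𝔮 (V i)
          * eval 𝔮 (U 0) ^ i * eval 𝔮 (U 1) ^ (d - 1 - i)
          = 𝔮 0 * ((-1 : K) ^ (d - 1) * eval ![eval 𝔮 (U 1), -eval 𝔮 (U 0)] (q 0))
            + 𝔮 1 * ((-1 : K) ^ (d - 1) * eval ![eval 𝔮 (U 1), -eval 𝔮 (U 0)] (q 1))
            + 𝔮 2 * ((-1 : K) ^ (d - 1) * eval ![eval 𝔮 (U 1), -eval 𝔮 (U 0)] (q 2)) := by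
        rw [← hTfact (eval 𝔮 (U 0)) (eval 𝔮 (U 1)) 0, ← hTfact (eval 𝔮 (U 0)) (eval 𝔮 (U 1)) 1, ← hTfact (eval 𝔮 (U 0)) (eval 𝔮 (U 1)) 2]
        rw [Finset.mul_sum, Finset.mul_sum, Finset.mul_sum, ← Finset.sum_add_distrib,
          ← Finset.sum_add_distrib]
        exact Finset.sum_congr rfl (fun i hi => by rw [hVe]; ring)
      rw [h1] at hF0
      have h3 : (-1 : K) ^ (d - 1) * ((-1 : K) ^ (d - 1)) = 1 := neg_one_pow_mul_self _
      linear_combination ((-1 : K) ^ (d - 1)) * hF0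
        - (𝔮 0 * eval ![eval 𝔮 (U 1), -eval 𝔮 (U 0)] (q 0) + 𝔮 1 * eval ![eval 𝔮 (U 1), -eval 𝔮 (U 0)] (q 1)
          + 𝔮 2 * eval ![eval 𝔮 (U 1), -eval 𝔮 (U 0)] (q 2)) * h3
    by_cases hsu : eval 𝔮 (U 0) = 0 ∧ eval 𝔮 (U 1) = 0
    · have hda : 𝔮 0 * a 0 + 𝔮 1 * a 1 + 𝔮 2 * a 2 = 0 := by
        have h1 := hsu.1
        rw [hU0e] at h1
        linear_combination h1
      have hdb : 𝔮 0 * b 0 + 𝔮 1 * b 1 + 𝔮 2 * b 2 = 0 := by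
        have h1 := hsu.2
        rw [hU1e] at h1
        linear_combination h1
      have hz := cross_triple a b 𝔮 hda hdb
      obtain ⟨c, hc⟩ := crossP_eq_zero (crossP a b) 𝔮 hcross hz
      refine ⟨c, ?_, ?_⟩
      · intro h0
        rw [h0, zero_smul] at hc
        exact h𝔮 hc
      · rw [h𝔭v]
        exact hc
    · exfalso
      have hxne : (![eval 𝔮 (U 1), -eval 𝔮 (U 0)] : Fin 2 → K) ≠ 0 := by
        intro h0
        apply hsu
        constructor
        · have h1 := congrFun h0 1
          simp only [Matrix.cons_val_one, Matrix.head_cons, Pi.zero_apply] at h1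
          exact neg_eq_zero.mp h1
        · have h1 := congrFun h0 0
          simpa using h1
      have h3 : (-1 : K) ^ (d - 1) * ((-1 : K) ^ (d - 1)) = 1 := neg_one_pow_mul_self _
      have hqx : ∀ kc : Fin 3, eval ![eval 𝔮 (U 1), -eval 𝔮 (U 0)] (q kc)
          = (-((-1 : K) ^ (d - 1) * (∑ i ∈ Finset.range d, (-1 : K) ^ (d - 1 - i)
              * eval 𝔮 (V i) * (((i : ℕ) : K) * eval 𝔮 (U 0) ^ (i - 1)) * eval 𝔮 (U 1) ^ (d - 1 - i)))) * a kc
            + (-((-1 : K) ^ (d - 1) * (∑ i ∈ Finset.range d, (-1 : K) ^ (d - 1 - i)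
              * eval 𝔮 (V i) * eval 𝔮 (U 0) ^ i * (((d - 1 - i : ℕ) : K) * eval 𝔮 (U 1) ^ (d - 1 - i - 1)))))
              * b kc := by
        intro kc
        have h1 := hbasis kc
        rw [hTfact (eval 𝔮 (U 0)) (eval 𝔮 (U 1)) kc] at h1
        linear_combination ((-1 : K) ^ (d - 1)) * h1
          + (-(eval ![eval 𝔮 (U 1), -eval 𝔮 (U 0)] (q kc))) * h3
      have hαβ : (-((-1 : K) ^ (d - 1) * (∑ i ∈ Finset.range d, (-1 : K) ^ (d - 1 - i)
            * eval 𝔮 (V i) * (((i : ℕ) : K) * eval 𝔮 (U 0) ^ (i - 1)) * eval 𝔮 (U 1) ^ (d - 1 - i)))) * eval 𝔮 (U 0)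
          + (-((-1 : K) ^ (d - 1) * (∑ i ∈ Finset.range d, (-1 : K) ^ (d - 1 - i)
            * eval 𝔮 (V i) * eval 𝔮 (U 0) ^ i * (((d - 1 - i : ℕ) : K) * eval 𝔮 (U 1) ^ (d - 1 - i - 1)))))
            * eval 𝔮 (U 1) = 0 := by
        have h1 := hF0'
        rw [hqx 0, hqx 1, hqx 2] at h1
        have hsa : eval 𝔮 (U 0) = a 0 * 𝔮 0 + a 1 * 𝔮 1 + a 2 * 𝔮 2 := by rw [hU0e]
        have hub : eval 𝔮 (U 1) = b 0 * 𝔮 0 + b 1 * 𝔮 1 + b 2 * 𝔮 2 := by rw [hU1e]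
        set A2 : K := -((-1 : K) ^ (d - 1) * (∑ i ∈ Finset.range d, (-1 : K) ^ (d - 1 - i)
          * eval 𝔮 (V i) * (((i : ℕ) : K) * eval 𝔮 (U 0) ^ (i - 1)) * eval 𝔮 (U 1) ^ (d - 1 - i)))
        set B2 : K := -((-1 : K) ^ (d - 1) * (∑ i ∈ Finset.range d, (-1 : K) ^ (d - 1 - i)
          * eval 𝔮 (V i) * eval 𝔮 (U 0) ^ i * (((d - 1 - i : ℕ) : K) * eval 𝔮 (U 1) ^ (d - 1 - i - 1))))
        linear_combination h1 + A2 * hsa + B2 * hub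
      have hpx : ∀ j, eval ![eval 𝔮 (U 1), -eval 𝔮 (U 0)] (p j) = a j * eval 𝔮 (U 1) - b j * eval 𝔮 (U 0) := by
        intro j
        rw [hevalp]
        simp only [Matrix.cons_val_zero, Matrix.cons_val_one, Matrix.head_cons]
        ring
      by_cases hune : eval 𝔮 (U 1) ≠ 0
      · have h1 := hkey ![eval 𝔮 (U 1), -eval 𝔮 (U 0)] hxne
          (-(-((-1 : K) ^ (d - 1) * (∑ i ∈ Finset.range d, (-1 : K) ^ (d - 1 - i)
            * eval 𝔮 (V i) * (((i : ℕ) : K) * eval 𝔮 (U 0) ^ (i - 1)) * eval 𝔮 (U 1) ^ (d - 1 - i)))))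
          (eval 𝔮 (U 1)) (fun j => by
            rw [hpx j, hqx j]
            linear_combination (b j) * hαβ)
        exact hune h1.2
      · push_neg at hune
        have hsne : eval 𝔮 (U 0) ≠ 0 := fun h0 => hsu ⟨h0, hune⟩
        have h2 : (-((-1 : K) ^ (d - 1) * (∑ i ∈ Finset.range d, (-1 : K) ^ (d - 1 - i)
            * eval 𝔮 (V i) * (((i : ℕ) : K) * eval 𝔮 (U 0) ^ (i - 1)) * eval 𝔮 (U 1) ^ (d - 1 - i)))) * eval 𝔮 (U 0) = 0 := by
          linear_combination hαβ - (-((-1 : K) ^ (d - 1) * (∑ i ∈ Finset.range d, (-1 : K) ^ (d - 1 - i)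
            * eval 𝔮 (V i) * eval 𝔮 (U 0) ^ i * (((d - 1 - i : ℕ) : K) * eval 𝔮 (U 1) ^ (d - 1 - i - 1))))) * hune
        have hα0 : -((-1 : K) ^ (d - 1) * (∑ i ∈ Finset.range d, (-1 : K) ^ (d - 1 - i)
            * eval 𝔮 (V i) * (((i : ℕ) : K) * eval 𝔮 (U 0) ^ (i - 1)) * eval 𝔮 (U 1) ^ (d - 1 - i))) = 0 := (mul_eq_zero.mp h2).resolve_right hsne
        have h1 := hkey ![eval 𝔮 (U 1), -eval 𝔮 (U 0)] hxne
          (-((-1 : K) ^ (d - 1) * (∑ i ∈ Finset.range d, (-1 : K) ^ (d - 1 - i)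
            * eval 𝔮 (V i) * eval 𝔮 (U 0) ^ i * (((d - 1 - i : ℕ) : K) * eval 𝔮 (U 1) ^ (d - 1 - i - 1)))))
          (eval 𝔮 (U 0)) (fun j => by
            rw [hpx j, hqx j]
            linear_combination ((-((-1 : K) ^ (d - 1) * (∑ i ∈ Finset.range d, (-1 : K) ^ (d - 1 - i)
            * eval 𝔮 (V i) * eval 𝔮 (U 0) ^ i * (((d - 1 - i : ℕ) : K) * eval 𝔮 (U 1) ^ (d - 1 - i - 1))))) * a j) * hune
              + (eval 𝔮 (U 0) * a j) * hα0)
        exact hsne h1.2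
  exact ⟨𝔭v, h𝔭ne, hmult1, hmult2, hU0𝔭, hU1𝔭, huniq⟩

end
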